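/- Let n ≥ 2 be an integer, κ > 0 and C₀ > 0. Let (X, d) be a bounded metric space with diam(X) = D > 0, and let μ be a Borel measure on X with 0 < μ(X) < ∞ satisfying μ(B(x, r)) ≤ κ⁻¹ rⁿ for all x ∈ X and all r > 0. Suppose u : X → ℝ is integrable with average ū = μ(X)⁻¹ ∫_X u dμ, f : X → [0, ∞) is integrable, and |u(x) − ū| ≤ C₀ · ∫_X f(y) / d(x, y)^{n−1} dμ(y) for μ-almost every x ∈ X. Then there exists a constant C > 0, depending only on n, such that ∫_X |u − ū| dμ ≤ C C₀ κ⁻¹ D · ‖f‖₁. -/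

import Mathlib

open MeasureTheory Metric ENNReal

/-- The Riesz potential of order 1 on an `n`-dimensional metric measure space:
`I₁ f (x) = ∫_X f(y) / d(x,y)^{n-1} dμ(y)`. -/
noncomputable def rieszPotential {X : Type*} [MetricSpace X] [MeasurableSpace X]
    (μ : Measure X) (n : ℕ) (f : X → ℝ) (x : X) : ℝ≥0∞ :=
  ∫⁻ y, ENNReal.ofReal (f y) / edist x y ^ (n - 1) ∂μ

/-- The average `μ(X)⁻¹ ∫_X g dμ` of a function. -/
noncomputable def avg {X : Type*} [MeasurableSpace X] (μ : Measure X) (g : X → ℝ) : ℝ :=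
  (μ Set.univ).toReal⁻¹ * ∫ x, g x ∂μ

lemma lsc_measure_ball {X : Type*} [MetricSpace X] [MeasurableSpace X]
    (ν : Measure X) (r : ℝ) :
    LowerSemicontinuous fun x => ν (ball x r) := by
  intro x c hc
  change c < ν (ball x r) at hc
  have goal_eq : (∀ᶠ x' in nhds x, c < ν (ball x' r)) →
      ∀ᶠ x' in nhds x, c < (fun x => ν (ball x r)) x' := fun h => h
  apply goal_eq
  rcases le_or_gt r 0 with hr | hr
  · rw [ball_eq_empty.2 hr] at hc; simp at hc
  · have hunion : ⋃ i : ℕ, ball x (r - r / (i + 2)) = ball x r := by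
      apply Set.Subset.antisymm
      · exact Set.iUnion_subset fun i => ball_subset_ball (by
          have : 0 < r / ((i : ℝ) + 2) := by positivity
          linarith)
      · intro y hy
        rw [mem_ball] at hy
        obtain ⟨i, hi⟩ := exists_nat_gt (r / (r - dist y x))
        refine Set.mem_iUnion.2 ⟨i, mem_ball.2 ?_⟩
        have h1 : 0 < r - dist y x := by linarith
        have h2 : r / ((i : ℝ) + 2) < r - dist y x := by
          rw [div_lt_iff₀ (by positivity)]
          have : r / (r - dist y x) < (i : ℝ) + 2 := by linarith
          calc r = (r / (r - dist y x)) * (r - dist y x) := by field_simp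
          _ < ((i : ℝ) + 2) * (r - dist y x) := mul_lt_mul_of_pos_right this h1
          _ = (r - dist y x) * ((i:ℝ) + 2) := by ring
        linarith
    have hmono : Monotone fun i : ℕ => ball x (r - r / (i + 2)) := by
      intro i j hij
      apply ball_subset_ball
      have hc' : ((i:ℝ) + 2) ≤ ((j:ℝ) + 2) := by
        have := (Nat.cast_le (α := ℝ)).2 hij
        linarith
      have : r / ((j:ℝ) + 2) ≤ r / ((i:ℝ) + 2) :=
        div_le_div_of_nonneg_left hr.le (by positivity) hc'
      linarith
    have key : ν (ball x r) = ⨆ i : ℕ, ν (ball x (r - r / (i + 2))) := by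
      rw [← hunion]; exact (hmono.directed_le).measure_iUnion
    rw [key] at hc
    obtain ⟨i, hi⟩ := lt_iSup_iff.1 hc
    have hpos : 0 < r / ((i:ℝ) + 2) := by positivity
    filter_upwards [ball_mem_nhds x hpos] with x' hx'
    refine hi.trans_le (measure_mono fun y hy => ?_)
    rw [mem_ball] at *
    calc dist y x' ≤ dist y x + dist x' x := by rw [dist_comm x' x]; exact dist_triangle y x x'
    _ < r := by linarith

lemma swap_ball_le {X : Type*} [MetricSpace X] [MeasurableSpace X] [BorelSpace X]
    (μ ν : Measure X) [SFinite ν] (r : ℝ) (hr : 0 < r) :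
    ∫⁻ x, ν (ball x r) ∂μ ≤ ∫⁻ y, μ (ball y (5 * r)) ∂ν := by
  classical
  set P : Set X := {x | 0 < ν (ball x r)} with hP
  -- Zorn: maximal 2r-separated subset of P
  obtain ⟨Z, hZ⟩ := zorn_subset {s : Set X | s ⊆ P ∧
      s.Pairwise fun a b => 2 * r ≤ dist a b} (by
    intro c hc hchain
    refine ⟨⋃₀ c, ⟨?_, ?_⟩, fun s hs => Set.subset_sUnion_of_mem hs⟩
    · exact Set.sUnion_subset fun s hs => (hc hs).1
    · intro a ha b hb hab
      obtain ⟨s, hs, has⟩ := ha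
      obtain ⟨t, ht, hbt⟩ := hb
      rcases hchain.total hs ht with h | h
      · exact (hc ht).2 (h has) hbt hab
      · exact (hc hs).2 has (h hbt) hab)
  obtain ⟨⟨hZP, hZsep⟩, hZmax⟩ := hZ
  -- coverage
  have hcov : ∀ x ∈ P, ∃ z ∈ Z, dist x z < 2 * r := by
    intro x hx
    by_contra h
    push_neg at h
    have hxZ : x ∉ Z := by
      intro hxZ
      have := h x hxZ
      simp at this
      linarith
    have : insert x Z ∈ {s : Set X | s ⊆ P ∧
        s.Pairwise fun a b => 2 * r ≤ dist a b} := by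
      constructor
      · exact Set.insert_subset hx hZP
      · refine hZsep.insert fun b hb hne => ?_
        exact ⟨h b hb, by rw [dist_comm]; exact h b hb⟩
    have := hZmax this (Set.subset_insert x Z) (Set.mem_insert x Z)
    exact hxZ this
  -- countability
  have hZc : Z.Countable := by
    have hdisj : Pairwise (Function.onFun Disjoint fun z : ↥Z => ball (z : X) r) := by
      intro z w hzw
      have hne : (z : X) ≠ (w : X) := fun h => hzw (Subtype.ext h)
      simp only [Function.onFun]
      rw [Set.disjoint_left]
      intro y hy hy'
      rw [mem_ball] at hy hy'
      have := hZsep z.2 w.2 hne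
      have := dist_triangle (z : X) y (w : X)
      rw [dist_comm (z : X) y] at this
      linarith
    have := ν.countable_meas_pos_of_disjoint_iUnion
      (fun z : ↥Z => measurableSet_ball) hdisj
    have huniv : {i : ↥Z | 0 < ν (ball (i : X) r)} = Set.univ := by
      ext z; simpa [hP] using hZP z.2
    rw [huniv, Set.countable_univ_iff] at this
    exact Set.countable_coe_iff.1 this
  -- if Z empty, P empty and LHS = 0
  rcases Z.eq_empty_or_nonempty with hZe | hZne
  · have : ∀ x, ν (ball x r) = 0 := by
      intro x
      by_contra h
      obtain ⟨z, hz, -⟩ := hcov x (by simpa [hP] using pos_iff_ne_zero.2 h)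
      rw [hZe] at hz; exact hz
    simp [this]
  · obtain ⟨e, he⟩ := hZc.exists_eq_range hZne
    set W : ℕ → Set X := disjointed (fun i => ball (e i) (2 * r)) with hW
    have hWm : ∀ i, MeasurableSet (W i) :=
      MeasurableSet.disjointed fun i => measurableSet_ball
    have hWd : Pairwise (Function.onFun Disjoint W) := disjoint_disjointed _
    have hWsub : ∀ i, W i ⊆ ball (e i) (2 * r) := disjointed_subset _
    have hPcov : P ⊆ ⋃ i, W i := by
      rw [hW, iUnion_disjointed]
      intro x hx
      obtain ⟨z, hz, hd⟩ := hcov x hx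
      rw [he] at hz
      obtain ⟨i, rfl⟩ := hz
      exact Set.mem_iUnion.2 ⟨i, mem_ball.2 hd⟩
    calc ∫⁻ x, ν (ball x r) ∂μ
        = ∫⁻ x, (⋃ i, W i).indicator (fun x => ν (ball x r)) x ∂μ := by
          refine lintegral_congr fun x => ?_
          by_cases hx : x ∈ ⋃ i, W i
          · rw [Set.indicator_of_mem hx]
          · rw [Set.indicator_of_notMem hx]
            by_contra h
            exact hx (hPcov (by simpa [hP] using pos_iff_ne_zero.2 h))
      _ = ∫⁻ x in ⋃ i, W i, ν (ball x r) ∂μ :=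
          lintegral_indicator (MeasurableSet.iUnion hWm) _
      _ ≤ ∑' i, ∫⁻ x in W i, ν (ball x r) ∂μ := lintegral_iUnion_le _ _
      _ ≤ ∑' i, ν (ball (e i) (3 * r)) * μ (W i) := by
          refine ENNReal.tsum_le_tsum fun i => ?_
          calc ∫⁻ x in W i, ν (ball x r) ∂μ
              ≤ ∫⁻ _ in W i, ν (ball (e i) (3 * r)) ∂μ := by
                refine setLIntegral_mono' (hWm i) fun x hx => measure_mono fun y hy => ?_
                have h1 : dist x (e i) < 2 * r := mem_ball.1 (hWsub i hx)
                rw [mem_ball] at *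
                calc dist y (e i) ≤ dist y x + dist x (e i) := dist_triangle _ _ _
                _ < 3 * r := by linarith
            _ = ν (ball (e i) (3 * r)) * μ (W i) := setLIntegral_const _ _
      _ = ∑' i, ∫⁻ y, (ball (e i) (3 * r)).indicator (fun _ => μ (W i)) y ∂ν := by
          refine tsum_congr fun i => ?_
          rw [lintegral_indicator measurableSet_ball, setLIntegral_const, mul_comm]
      _ = ∫⁻ y, ∑' i, (ball (e i) (3 * r)).indicator (fun _ => μ (W i)) y ∂ν :=
          (lintegral_tsum fun i =>
            ((measurable_const.indicator measurableSet_ball).aemeasurable)).symm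
      _ ≤ ∫⁻ y, μ (ball y (5 * r)) ∂ν := by
          refine lintegral_mono fun y => ?_
          have key : ∀ i, (ball (e i) (3 * r)).indicator (fun _ => μ (W i)) y =
              μ (if y ∈ ball (e i) (3 * r) then W i else ∅) := by
            intro i
            by_cases h : y ∈ ball (e i) (3 * r) <;> simp [h]
          simp only [key]
          rw [← measure_iUnion]
          · refine measure_mono fun x hx => ?_
            obtain ⟨i, hi⟩ := Set.mem_iUnion.1 hx
            by_cases h : y ∈ ball (e i) (3 * r)
            · rw [if_pos h] at hi
              have h1 : dist x (e i) < 2 * r := mem_ball.1 (hWsub i hi)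
              have h2 : dist (e i) y < 3 * r := by rw [← mem_ball']; exact h
              rw [mem_ball]
              calc dist x y ≤ dist x (e i) + dist (e i) y := dist_triangle _ _ _
              _ < 5 * r := by linarith
            · rw [if_neg h] at hi; exact absurd hi (Set.notMem_empty x)
          · intro i j hij
            by_cases h1 : y ∈ ball (e i) (3 * r) <;>
              by_cases h2 : y ∈ ball (e j) (3 * r) <;>
              simp [h1, h2, Function.onFun]
            exact (hWd hij).mono le_rfl le_rfl
          · intro i
            by_cases h : y ∈ ball (e i) (3 * r)
            · rw [if_pos h]; exact hWm i
            · rw [if_neg h]; exact MeasurableSet.empty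

lemma real_calc (κ D : ℝ) (hκ : 0 < κ) (hD : 0 < D) (m k : ℕ) :
    ((D / 2^k)^(m+1))⁻¹ * (κ⁻¹ * (5*(2*D/2^k))^(m+2)) = κ⁻¹ * 10^(m+2) * D * (2⁻¹)^k := by
  have h2k : (2:ℝ)^k ≠ 0 := by positivity
  have hDne : D ≠ 0 := hD.ne'
  have h5 : (5:ℝ)*(2*D/2^k) = 10*D/2^k := by ring
  rw [h5, div_pow, div_pow, mul_pow, inv_div, inv_pow,
    pow_succ ((2:ℝ)^k) (m+1), pow_succ D (m+1)]
  field_simp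

lemma tsum_calc (A : ℝ) (hA : 0 ≤ A) :
    ∑' k : ℕ, ENNReal.ofReal (A * (2⁻¹)^k) = 2 * ENNReal.ofReal A := by
  have h2 : ENNReal.ofReal ((2:ℝ)⁻¹) = 2⁻¹ := by
    rw [ENNReal.ofReal_inv_of_pos two_pos]
    norm_num
  simp_rw [ENNReal.ofReal_mul hA, ENNReal.ofReal_pow (by norm_num : (0:ℝ) ≤ 2⁻¹), h2]
  rw [ENNReal.tsum_mul_left, ENNReal.tsum_geometric, ENNReal.one_sub_inv_two, inv_inv,
    mul_comm]

lemma kernel_double_bound {X : Type*} [MetricSpace X] [MeasurableSpace X] [BorelSpace X]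
    (μ : Measure X) [IsFiniteMeasure μ] (κ D : ℝ) (m : ℕ) (hκ : 0 < κ) (hD : 0 < D)
    (hdiam : ∀ x y : X, dist x y ≤ D)
    (hball : ∀ (x : X) (r : ℝ), 0 < r → μ (ball x r) ≤ ENNReal.ofReal (κ⁻¹ * r ^ (m+2)))
    (φ : X → ℝ≥0∞) (hφ : Measurable φ) (hφfin : ∫⁻ y, φ y ∂μ ≠ ⊤) :
    ∫⁻ x, ∫⁻ y, φ y * (edist x y ^ (m+1))⁻¹ ∂μ ∂μ ≤
      ENNReal.ofReal (2 * 10^(m+2) * κ⁻¹ * D) * ∫⁻ y, φ y ∂μ := by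
  -- singletons are null
  have hsing : ∀ x : X, μ {x} = 0 := by
    intro x
    refine le_antisymm ?_ zero_le
    have hb : ∀ r : ℝ, 0 < r → μ {x} ≤ ENNReal.ofReal (κ⁻¹ * r ^ (m+2)) := fun r hr =>
      (measure_mono (Set.singleton_subset_iff.2 (mem_ball_self hr))).trans (hball x r hr)
    have h0 : Filter.Tendsto (fun r : ℝ => ENNReal.ofReal (κ⁻¹ * r ^ (m+2)))
        (nhdsWithin 0 (Set.Ioi 0)) (nhds 0) := by
      have h1 : Filter.Tendsto (fun r : ℝ => κ⁻¹ * r ^ (m+2)) (nhds 0) (nhds 0) := by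
        have hcont : Continuous fun r : ℝ => κ⁻¹ * r ^ (m+2) :=
          continuous_const.mul (continuous_pow _)
        have := hcont.tendsto (0:ℝ)
        simpa using this
      have := (ENNReal.continuous_ofReal.tendsto 0).comp (h1.mono_left (nhdsWithin_le_nhds (s := Set.Ioi (0:ℝ))))
      rw [ENNReal.ofReal_zero] at this; exact this
    exact ge_of_tendsto h0 (by
      filter_upwards [self_mem_nhdsWithin] with r hr
      exact hb r hr)
  set ν : Measure X := μ.withDensity φ with hν
  haveI : IsFiniteMeasure ν := isFiniteMeasure_withDensity hφfin
  set c : ℕ → ℝ≥0∞ := fun k => (ENNReal.ofReal (D / 2^k) ^ (m+1))⁻¹ with hc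
  have hRpos : ∀ k : ℕ, 0 < 2*D/2^k := fun k => by positivity
  have hrpos : ∀ k : ℕ, 0 < D/2^k := fun k => by positivity
  -- inner bound
  have inner : ∀ x : X, ∫⁻ y, φ y * (edist x y ^ (m+1))⁻¹ ∂μ ≤
      ∑' k : ℕ, c k * ν (ball x (2*D/2^k)) := by
    intro x
    have hae : ∀ᵐ y ∂μ, y ≠ x := by
      rw [MeasureTheory.ae_iff]
      simpa [Set.setOf_eq_eq_singleton] using hsing x
    calc ∫⁻ y, φ y * (edist x y ^ (m+1))⁻¹ ∂μ
        ≤ ∫⁻ y, ∑' k : ℕ, c k * (ball x (2*D/2^k)).indicator φ y ∂μ := by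
          apply lintegral_mono_ae
          filter_upwards [hae] with y hy
          set t := dist x y with ht
          have htpos : 0 < t := dist_pos.2 (Ne.symm hy)
          have htD : t ≤ D := hdiam x y
          -- find the right scale
          have hex : ∃ k : ℕ, 2*D/2^(k+1) ≤ t := by
            obtain ⟨N, hN⟩ := pow_unbounded_of_one_lt (2*D/t) (one_lt_two (α := ℝ))
            refine ⟨N, le_of_lt ?_⟩
            have h1 : 2*D < t * 2^N := by
              rw [div_lt_iff₀ htpos] at hN; linarith [hN]
            rw [div_lt_iff₀ (by positivity)]
            calc 2*D < t * 2^N := h1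
            _ ≤ t * 2^(N+1) := by
                have : (2:ℝ)^N ≤ 2^(N+1) := by
                  apply pow_le_pow_right₀ one_le_two (Nat.le_succ N)
                nlinarith
          have hk0 : 2*D/2^(Nat.find hex +1) ≤ t := Nat.find_spec hex
          set k0 := Nat.find hex with hk0def
          have hlt : t < 2*D/2^k0 := by
            rcases Nat.eq_zero_or_pos k0 with h | h
            · rw [h, pow_zero]
              calc t ≤ D := htD
              _ < 2*D/1 := by linarith
            · have hj : k0 - 1 < Nat.find hex := by omega
              have hm := Nat.find_min hex hj
              push_neg at hm
              have heq : k0 - 1 + 1 = k0 := by omega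
              rwa [heq] at hm
          have hmem : y ∈ ball x (2*D/2^k0) := by
            rw [mem_ball, dist_comm]; exact hlt
          have hhalf : D/2^k0 = 2*D/2^(k0+1) := by
            rw [pow_succ]; field_simp
          refine le_trans ?_ (ENNReal.le_tsum k0)
          rw [Set.indicator_of_mem hmem, mul_comm (c k0)]
          apply mul_le_mul_right
          rw [hc]
          apply ENNReal.inv_le_inv.2
          apply pow_le_pow_left'
          rw [edist_dist]
          apply ENNReal.ofReal_le_ofReal
          rw [hhalf]; exact hk0
      _ = ∑' k : ℕ, c k * ν (ball x (2*D/2^k)) := by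
          rw [lintegral_tsum fun k => ((hφ.indicator measurableSet_ball).const_mul
            (c k)).aemeasurable]
          refine tsum_congr fun k => ?_
          rw [lintegral_const_mul'' _ (hφ.indicator measurableSet_ball).aemeasurable,
            lintegral_indicator measurableSet_ball, hν,
            withDensity_apply _ measurableSet_ball]
  calc ∫⁻ x, ∫⁻ y, φ y * (edist x y ^ (m+1))⁻¹ ∂μ ∂μ
      ≤ ∫⁻ x, ∑' k : ℕ, c k * ν (ball x (2*D/2^k)) ∂μ := lintegral_mono inner
    _ = ∑' k : ℕ, c k * ∫⁻ x, ν (ball x (2*D/2^k)) ∂μ := by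
        rw [lintegral_tsum fun k => ((lsc_measure_ball ν _).measurable.const_mul
          (c k)).aemeasurable]
        exact tsum_congr fun k => lintegral_const_mul'' _
          (lsc_measure_ball ν _).measurable.aemeasurable
    _ ≤ ∑' k : ℕ, c k * (ENNReal.ofReal (κ⁻¹ * (5*(2*D/2^k))^(m+2)) * ν Set.univ) := by
        refine ENNReal.tsum_le_tsum fun k => mul_le_mul_right ?_ _
        calc ∫⁻ x, ν (ball x (2*D/2^k)) ∂μ
            ≤ ∫⁻ y, μ (ball y (5*(2*D/2^k))) ∂ν := swap_ball_le μ ν _ (hRpos k)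
          _ ≤ ∫⁻ _, ENNReal.ofReal (κ⁻¹ * (5*(2*D/2^k))^(m+2)) ∂ν :=
              lintegral_mono fun y => hball y _ (by positivity)
          _ = ENNReal.ofReal (κ⁻¹ * (5*(2*D/2^k))^(m+2)) * ν Set.univ := lintegral_const _
    _ = ∑' k : ℕ, ENNReal.ofReal ((κ⁻¹ * 10^(m+2) * D) * (2⁻¹)^k) * ν Set.univ := by
        refine tsum_congr fun k => ?_
        rw [← mul_assoc]
        congr 1
        show (ENNReal.ofReal (D / 2 ^ k) ^ (m + 1))⁻¹ *
          ENNReal.ofReal (κ⁻¹ * (5*(2*D/2^k))^(m+2)) = _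
        rw [← ENNReal.ofReal_pow (hrpos k).le,
          ← ENNReal.ofReal_inv_of_pos (pow_pos (hrpos k) (m+1)),
          ← ENNReal.ofReal_mul (by positivity)]
        rw [real_calc κ D hκ hD m k]
    _ = (∑' k : ℕ, ENNReal.ofReal ((κ⁻¹ * 10^(m+2) * D) * (2⁻¹)^k)) * ν Set.univ :=
        ENNReal.tsum_mul_right
    _ = ENNReal.ofReal (2 * 10^(m+2) * κ⁻¹ * D) * ∫⁻ y, φ y ∂μ := by
        rw [tsum_calc _ (by positivity), hν, withDensity_apply _ MeasurableSet.univ,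
          setLIntegral_univ, ← ENNReal.ofReal_ofNat 2,
          ← ENNReal.ofReal_mul (by norm_num)]
        congr 2
        ring

/-- the `L¹` Poincaré-type inequality. On a bounded metric space of positive
diameter `D` with a finite Borel measure satisfying `μ(B(x,r)) ≤ κ⁻¹ rⁿ`, if an integrable
`u` with average `ū` satisfies `|u − ū| ≤ C₀ I₁ f` a.e. for some integrable `f ≥ 0`, then
`∫ |u − ū| dμ ≤ C C₀ κ⁻¹ D ‖f‖₁`, with `C` depending only on `n`. -/
theorem L1_poincare_of_riesz_bound (n : ℕ) (hn : 2 ≤ n) :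
    ∃ C : ℝ, 0 < C ∧
      ∀ (X : Type*) [MetricSpace X] [MeasurableSpace X] [BorelSpace X] (κ C₀ : ℝ),
        0 < κ → 0 < C₀ →
        Bornology.IsBounded (Set.univ : Set X) →
        0 < diam (Set.univ : Set X) →
        ∀ μ : Measure X, 0 < μ Set.univ → μ Set.univ < ⊤ →
          (∀ (x : X) (r : ℝ), 0 < r → μ (ball x r) ≤ ENNReal.ofReal (κ⁻¹ * r ^ n)) →
          ∀ u f : X → ℝ, Integrable u μ → Integrable f μ → (∀ y, 0 ≤ f y) →
            (∀ᵐ x ∂μ,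
              ENNReal.ofReal |u x - avg μ u| ≤
                ENNReal.ofReal C₀ * rieszPotential μ n f x) →
            (∫ x, |u x - avg μ u| ∂μ) ≤
              C * C₀ * κ⁻¹ * diam (Set.univ : Set X) * ∫ y, f y ∂μ := by
  refine ⟨2 * 10 ^ n, by positivity, ?_⟩
  intro X _ _ _ κ C₀ hκ hC₀ hbdd hD μ hμ0 hμfin hball u f hu hf hf0 hae
  obtain ⟨m, rfl⟩ : ∃ m, n = m + 2 := ⟨n - 2, by omega⟩
  haveI : IsFiniteMeasure μ := ⟨hμfin⟩
  set D := diam (Set.univ : Set X) with hDdef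
  have hdiam : ∀ x y : X, dist x y ≤ D := fun x y =>
    dist_le_diam_of_mem hbdd trivial trivial
  -- measurable representative of ofReal ∘ f
  have hfm : AEMeasurable (fun y => ENNReal.ofReal (f y)) μ :=
    ENNReal.measurable_ofReal.comp_aemeasurable hf.1.aemeasurable
  set φ : X → ℝ≥0∞ := hfm.mk _ with hφdef
  have hφmeas : Measurable φ := hfm.measurable_mk
  have hφae : (fun y => ENNReal.ofReal (f y)) =ᵐ[μ] φ := hfm.ae_eq_mk
  have hIf : ENNReal.ofReal (∫ y, f y ∂μ) = ∫⁻ y, ENNReal.ofReal (f y) ∂μ :=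
    ofReal_integral_eq_lintegral_ofReal hf (Filter.Eventually.of_forall hf0)
  have hφint : ∫⁻ y, φ y ∂μ = ENNReal.ofReal (∫ y, f y ∂μ) := by
    rw [hIf]; exact (lintegral_congr_ae hφae).symm
  have hφfin : ∫⁻ y, φ y ∂μ ≠ ⊤ := by rw [hφint]; exact ENNReal.ofReal_ne_top
  -- rewrite riesz potential
  have hriesz : ∀ x : X, rieszPotential μ (m+2) f x =
      ∫⁻ y, φ y * (edist x y ^ (m+1))⁻¹ ∂μ := by
    intro x
    unfold rieszPotential
    refine lintegral_congr_ae ?_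
    filter_upwards [hφae] with y hy
    have h21 : m + 2 - 1 = m + 1 := rfl
    rw [div_eq_mul_inv, hy, h21]
  -- main lintegral chain
  have h1 : ∫⁻ x, ENNReal.ofReal |u x - avg μ u| ∂μ ≤
      ENNReal.ofReal C₀ *
        (ENNReal.ofReal (2 * 10^(m+2) * κ⁻¹ * D) * ENNReal.ofReal (∫ y, f y ∂μ)) := by
    calc ∫⁻ x, ENNReal.ofReal |u x - avg μ u| ∂μ
        ≤ ∫⁻ x, ENNReal.ofReal C₀ * rieszPotential μ (m+2) f x ∂μ := lintegral_mono_ae hae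
      _ = ENNReal.ofReal C₀ * ∫⁻ x, rieszPotential μ (m+2) f x ∂μ :=
          lintegral_const_mul' _ _ ENNReal.ofReal_ne_top
      _ = ENNReal.ofReal C₀ * ∫⁻ x, ∫⁻ y, φ y * (edist x y ^ (m+1))⁻¹ ∂μ ∂μ := by
          rw [lintegral_congr fun x => hriesz x]
      _ ≤ ENNReal.ofReal C₀ *
          (ENNReal.ofReal (2 * 10^(m+2) * κ⁻¹ * D) * ENNReal.ofReal (∫ y, f y ∂μ)) := by
          refine mul_le_mul_right ?_ _
          rw [← hφint]
          exact kernel_double_bound μ κ D m hκ hD hdiam hball φ hφmeas hφfin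
  -- convert to real integrals
  have hInt : Integrable (fun x => |u x - avg μ u|) μ := (hu.sub (integrable_const _)).abs
  have hLHS : ∫ x, |u x - avg μ u| ∂μ =
      (∫⁻ x, ENNReal.ofReal |u x - avg μ u| ∂μ).toReal :=
    integral_eq_lintegral_of_nonneg_ae (Filter.Eventually.of_forall fun x => abs_nonneg _)
      hInt.1
  rw [hLHS]
  have hRne : ENNReal.ofReal C₀ *
      (ENNReal.ofReal (2 * 10^(m+2) * κ⁻¹ * D) * ENNReal.ofReal (∫ y, f y ∂μ)) ≠ ⊤ :=
    ENNReal.mul_ne_top ENNReal.ofReal_ne_top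
      (ENNReal.mul_ne_top ENNReal.ofReal_ne_top ENNReal.ofReal_ne_top)
  have := ENNReal.toReal_mono hRne h1
  rw [ENNReal.toReal_mul, ENNReal.toReal_mul, ENNReal.toReal_ofReal hC₀.le,
    ENNReal.toReal_ofReal (by positivity), ENNReal.toReal_ofReal (integral_nonneg hf0)]
      at this
  calc (∫⁻ x, ENNReal.ofReal |u x - avg μ u| ∂μ).toReal
      ≤ C₀ * (2 * 10^(m+2) * κ⁻¹ * D * ∫ y, f y ∂μ) := this
    _ = 2 * 10^(m+2) * C₀ * κ⁻¹ * D * ∫ y, f y ∂μ := by ring
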